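/- (Holevo–Helstrom, achievability.) For any two density matrices ρ and σ on ℂ^d there exists an orthogonal projection Π (a Hermitian matrix with Π² = Π) such that Tr(Π(ρ−σ)) = TD(ρ,σ); consequently the two-outcome measurement {Π, I−Π} distinguishes ρ from σ, given each with probability 1/2, with success probability exactly (1/2)(1 + TD(ρ,σ)). This measurement is called the Helstrom measurement. -/

import Mathlib

open Matrix ComplexOrder

/-- The trace norm of a matrix: `‖X‖₁ = Tr √(Xᴴ X)`. -/
noncomputable def traceNorm {d : ℕ} (X : Matrix (Fin d) (Fin d) ℂ) : ℝ :=
  (((Matrix.posSemidef_conjTranspose_mul_self X).1.eigenvectorUnitary.1 *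
      diagonal (((↑) : ℝ → ℂ) ∘ (√·) ∘ (Matrix.posSemidef_conjTranspose_mul_self X).1.eigenvalues) *
      (star (Matrix.posSemidef_conjTranspose_mul_self X).1.eigenvectorUnitary :
        Matrix (Fin d) (Fin d) ℂ)).trace).re

/-- The trace distance between two matrices: `TD(ρ,σ) = ‖ρ − σ‖₁ / 2`. -/
noncomputable def traceDist {d : ℕ} (ρ σ : Matrix (Fin d) (Fin d) ℂ) : ℝ :=
  traceNorm (ρ - σ) / 2

/-- A density matrix: positive semidefinite with trace 1. -/
def IsDensityMatrix {d : ℕ} (ρ : Matrix (Fin d) (Fin d) ℂ) : Prop :=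
  ρ.PosSemidef ∧ ρ.trace = 1


/-- Holevo–Helstrom (achievability): there is an orthogonal projection `P`
(a Hermitian matrix with `P² = P`) with `Tr(P(ρ−σ)) = TD(ρ,σ)`; consequently the two-outcome
measurement `{P, I−P}` distinguishes `ρ` from `σ` (given each with probability 1/2)
with success probability exactly `(1/2)(1 + TD(ρ,σ))`. -/
theorem holevo_helstrom_achievability {d : ℕ} {ρ σ : Matrix (Fin d) (Fin d) ℂ}
    (hρ : IsDensityMatrix ρ) (hσ : IsDensityMatrix σ) :
    ∃ P : Matrix (Fin d) (Fin d) ℂ, P.IsHermitian ∧ P * P = P ∧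
      ((P * (ρ - σ)).trace).re = traceDist ρ σ ∧
      (1 / 2) * ((P * ρ).trace).re
          + (1 / 2) * ((((1 : Matrix (Fin d) (Fin d) ℂ) - P) * σ).trace).re
        = (1 / 2) * (1 + traceDist ρ σ) := by
  have hΔ : (ρ - σ).IsHermitian := hρ.1.1.sub hσ.1.1
  set U : Matrix (Fin d) (Fin d) ℂ := (hΔ.eigenvectorUnitary : Matrix (Fin d) (Fin d) ℂ) with hU
  set lam := hΔ.eigenvalues with hlam
  have hUU : star U * U = 1 := Unitary.coe_star_mul_self _
  have hUU' : U * star U = 1 := Unitary.coe_mul_star_self _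
  set M : (ℝ → ℝ) → Matrix (Fin d) (Fin d) ℂ :=
    fun f => U * diagonal (fun i => ((f (lam i) : ℝ) : ℂ)) * star U with hM
  have hMmul : ∀ f g, M f * M g = M (fun x => f x * g x) := by
    intro f g
    simp only [hM]
    calc U * diagonal (fun i => ((f (lam i) : ℝ) : ℂ)) * star U *
          (U * diagonal (fun i => ((g (lam i) : ℝ) : ℂ)) * star U)
        = U * (diagonal (fun i => ((f (lam i) : ℝ) : ℂ)) * (star U * U) *
            diagonal (fun i => ((g (lam i) : ℝ) : ℂ))) * star U := by
          noncomm_ring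
      _ = _ := by rw [hUU]; simp [diagonal_mul_diagonal, mul_assoc]
  have hMherm : ∀ f, (M f).IsHermitian := by
    intro f
    simp only [hM, IsHermitian, star_eq_conjTranspose, conjTranspose_mul]
    rw [diagonal_conjTranspose]
    have : (star fun i => ((f (lam i) : ℝ) : ℂ)) = fun i => ((f (lam i) : ℝ) : ℂ) := by
      funext i; simp [Pi.star_def, Complex.conj_ofReal]
    rw [this]
    simp [mul_assoc, star_eq_conjTranspose]
  have hMtrace : ∀ f, (M f).trace = ((∑ i, f (lam i) : ℝ) : ℂ) := by
    intro f
    simp only [hM]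
    rw [trace_mul_cycle, hUU, one_mul, trace_diagonal]
    push_cast
    rfl
  have hΔeq : ρ - σ = M id := hΔ.spectral_theorem
  set f : ℝ → ℝ := fun x => if 0 ≤ x then 1 else 0 with hf
  have hff : (fun x => f x * f x) = f := by
    funext x; simp only [hf]; split <;> simp
  -- trace of Δ is zero
  have htr0 : ∑ i, lam i = 0 := by
    have : (ρ - σ).trace = 0 := by
      rw [trace_sub, hρ.2, hσ.2, sub_self]
    rw [hΔeq, hMtrace] at this
    exact_mod_cast this
  -- trace norm = sum of |eigenvalues|
  have habs : (M abs).PosSemidef := by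
    have h1 : (diagonal (fun i => ((|lam i| : ℝ) : ℂ))).PosSemidef :=
      posSemidef_diagonal_iff.mpr fun i => Complex.zero_le_real.mpr (abs_nonneg _)
    have := h1.mul_mul_conjTranspose_same U
    rwa [← star_eq_conjTranspose] at this
  have hsq : (M abs) ^ 2 = (ρ - σ)ᴴ * (ρ - σ) := by
    rw [pow_two, hMmul, hΔ.eq, hΔeq, hMmul]
    funext x
    simp [abs_mul_abs_self]
  have hsqrt : M abs = (Matrix.posSemidef_conjTranspose_mul_self (ρ - σ)).1.eigenvectorUnitary.1 *
      diagonal (((↑) : ℝ → ℂ) ∘ (√·) ∘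
        (Matrix.posSemidef_conjTranspose_mul_self (ρ - σ)).1.eigenvalues) *
      (star (Matrix.posSemidef_conjTranspose_mul_self (ρ - σ)).1.eigenvectorUnitary :
        Matrix (Fin d) (Fin d) ℂ) := by
    have hA := (Matrix.posSemidef_conjTranspose_mul_self (ρ - σ)).1
    have e1 : cfc Real.sqrt ((ρ - σ)ᴴ * (ρ - σ)) = (Matrix.posSemidef_conjTranspose_mul_self (ρ - σ)).1.eigenvectorUnitary.1 *
      diagonal (((↑) : ℝ → ℂ) ∘ (√·) ∘
        (Matrix.posSemidef_conjTranspose_mul_self (ρ - σ)).1.eigenvalues) *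
      (star (Matrix.posSemidef_conjTranspose_mul_self (ρ - σ)).1.eigenvectorUnitary :
        Matrix (Fin d) (Fin d) ℂ) := by
      rw [(Matrix.posSemidef_conjTranspose_mul_self (ρ - σ)).1.cfc_eq]
      simp only [IsHermitian.cfc, Unitary.conjStarAlgAut_apply]
      rfl
    rw [← e1]
    have e2 : cfc (fun x : ℝ => x * x) (ρ - σ) = (ρ - σ)ᴴ * (ρ - σ) := by
      rw [cfc_mul (fun x : ℝ => x) (fun x : ℝ => x) (ρ - σ), cfc_id' ℝ (ρ - σ), hΔ.eq]
    rw [← e2, ← cfc_comp' Real.sqrt (fun x : ℝ => x * x) (ρ - σ)]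
    have e3 : (fun x : ℝ => √(x * x)) = abs := by
      funext x; simp [Real.sqrt_mul_self_eq_abs]
    rw [e3, hΔ.cfc_eq]
    simp only [IsHermitian.cfc, Unitary.conjStarAlgAut_apply, hM]
    rfl
  have hTN : traceNorm (ρ - σ) = ∑ i, |lam i| := by
    rw [traceNorm, ← hsqrt, hMtrace]
    simp
  -- trace of P * Δ
  have hPD : ((M f * (ρ - σ)).trace).re = traceDist ρ σ := by
    rw [hΔeq, hMmul, hMtrace (fun x => f x * id x), Complex.ofReal_re]
    have hsum : ∑ i, f (lam i) * id (lam i) = ((∑ i, |lam i|) + ∑ i, lam i) / 2 := by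
      rw [← Finset.sum_add_distrib, Finset.sum_div]
      apply Finset.sum_congr rfl
      intro i _
      simp only [hf, id]
      split_ifs with h
      · rw [abs_of_nonneg h]; ring
      · rw [abs_of_neg (lt_of_not_ge h)]; ring
    rw [hsum, htr0, traceDist, hTN]
    ring
  refine ⟨M f, hMherm f, by rw [hMmul, hff], hPD, ?_⟩
  -- success probability
  have hσtr : ((σ).trace).re = 1 := by rw [hσ.2]; simp
  have hsplit : ((M f * (ρ - σ)).trace).re
      = ((M f * ρ).trace).re - ((M f * σ).trace).re := by
    rw [mul_sub, trace_sub]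
    simp [Complex.sub_re]
  have h1P : ((((1 : Matrix (Fin d) (Fin d) ℂ) - M f) * σ).trace).re
      = 1 - ((M f * σ).trace).re := by
    rw [sub_mul, one_mul, trace_sub]
    simp [Complex.sub_re, hσtr]
  rw [h1P]
  rw [hsplit] at hPD
  linarith
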